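/- Let p > 3, a ∈ F_{q^2}^* with a ≠ −2/3 and 3a^{q+1} + a + a^q = 0. Then w := −3((3a+2)/(3a))^2 lies in F_q and w^{(q-1)/2} = (−3)^{(q-1)/2} · ((3a+2)/(3a))^{q-1}; in particular, if −3 is a non-square in F_q, then w is a nonzero square in F_q. -/

import Mathlib

/-- Let `p > 3`, `a ∈ F_{q^2}^*` with `a ≠ -2/3` and `3a^{q+1} + a + a^q = 0`.
Then `w := -3((3a+2)/(3a))^2` lies in `F_q`,
`w^{(q-1)/2} = (-3)^{(q-1)/2}((3a+2)/(3a))^{q-1}`, and if `-3` is a non-square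
in `F_q`, then `w` is a nonzero square in `F_q`. -/
theorem stmt_16 (p h q : ℕ) (hp : p.Prime) (hp3 : 3 < p) (hh : 1 ≤ h) (hq : q = p ^ h)
    (F : Type*) [Field F] [Fintype F] [CharP F p]
    (hcard : Fintype.card F = q ^ 2)
    (a : F) (ha : a ≠ 0) (ha2 : a ≠ -2 / 3)
    (hrel : 3 * a ^ (q + 1) + a + a ^ q = 0) :
    (-3 * ((3 * a + 2) / (3 * a)) ^ 2) ^ q = -3 * ((3 * a + 2) / (3 * a)) ^ 2 ∧
      (-3 * ((3 * a + 2) / (3 * a)) ^ 2) ^ ((q - 1) / 2) =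
        (-3 : F) ^ ((q - 1) / 2) * ((3 * a + 2) / (3 * a)) ^ (q - 1) ∧
      ((¬∃ u : F, u ^ q = u ∧ u ^ 2 = (-3 : F)) →
        ∃ u : F, u ^ q = u ∧ u ≠ 0 ∧ -3 * ((3 * a + 2) / (3 * a)) ^ 2 = u ^ 2) := by
  haveI := Fact.mk hp
  have h3 : (3 : F) ≠ 0 := by
    have h3' : ((3 : ℕ) : F) ≠ 0 := by
      rw [Ne, CharP.cast_eq_zero_iff F p]
      intro hd; have := Nat.le_of_dvd (by norm_num) hd; omega
    simpa using h3'
  have hodd : Odd q := by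
    subst hq
    exact (hp.odd_of_ne_two (by omega)).pow
  -- Frobenius : x ↦ x^q is a ring hom
  have hφ : ∀ x : F, x ^ q = iterateFrobenius F p h x := fun x => by
    rw [iterateFrobenius_def, hq]
  have hmul : ∀ x y : F, (x * y) ^ q = x ^ q * y ^ q := fun x y => by
    simp [hφ, map_mul]
  have hdiv : ∀ x y : F, (x / y) ^ q = x ^ q / y ^ q := fun x y => by
    simp [hφ, map_div₀]
  have hadd : ∀ x y : F, (x + y) ^ q = x ^ q + y ^ q := fun x y => by
    simp [hφ, map_add]
  have h3q : (3 : F) ^ q = 3 := by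
    rw [hφ]; exact map_ofNat _ 3
  have h2q : (2 : F) ^ q = 2 := by
    rw [hφ]; exact map_ofNat _ 2
  have hn3q : (-3 : F) ^ q = -3 := by
    rw [hφ, map_neg, ← hφ, h3q]
  -- derive a^q * (3a+1) = -a
  have haq1 : a ^ q * (3 * a + 1) = -a := by
    have hps : a ^ (q + 1) = a ^ q * a := by rw [pow_succ]
    rw [hps] at hrel
    linear_combination hrel
  have h3a1 : 3 * a + 1 ≠ 0 := by
    intro h0
    rw [h0, mul_zero] at haq1
    exact ha (by linear_combination haq1)
  have hcne : a ^ q ≠ 0 := by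
    intro h0
    rw [h0, zero_mul] at haq1
    exact ha (by linear_combination haq1)
  have h3a2 : 3 * a + 2 ≠ 0 := by
    intro h0
    apply ha2
    field_simp
    linear_combination h0
  have h3a : 3 * a ≠ 0 := mul_ne_zero h3 ha
  set b : F := (3 * a + 2) / (3 * a) with hbdef
  have hbne : b ≠ 0 := div_ne_zero h3a2 h3a
  -- key: b^q = -b
  have hbq : b ^ q = -b := by
    rw [hbdef, hdiv, hadd, hmul, h3q, h2q]
    have hden : (3 : F) * a ^ q ≠ 0 := mul_ne_zero h3 hcne
    field_simp
    linear_combination (2 : F) * haq1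
  -- Part 1
  have part1 : (-3 * b ^ 2) ^ q = -3 * b ^ 2 := by
    rw [hmul, hn3q, ← pow_mul, mul_comm 2 q, pow_mul, hbq]
    ring
  -- Part 2
  obtain ⟨k, hk⟩ := hodd
  have hk2 : 2 * ((q - 1) / 2) = q - 1 := by omega
  have part2 : (-3 * b ^ 2) ^ ((q - 1) / 2) =
      (-3 : F) ^ ((q - 1) / 2) * b ^ (q - 1) := by
    rw [mul_pow, ← pow_mul, hk2]
  refine ⟨part1, part2, ?_⟩
  -- Part 3
  intro hns
  have hn3 : (-3 : F) ≠ 0 := neg_ne_zero.mpr h3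
  -- -3 is a square in F
  have hn3q1 : (-3 : F) ^ (q - 1) = 1 := by
    have : (-3 : F) ^ (q - 1) * (-3) = -3 := by
      rw [← pow_succ]
      have : q - 1 + 1 = q := by omega
      rw [this, hn3q]
    field_simp at this
    exact neg_inj.mp this
  have hsq : IsSquare (-3 : F) := by
    rw [FiniteField.isSquare_iff (by
        rw [ringChar.eq F p]; omega) hn3]
    rw [hcard]
    have hqq : q ^ 2 / 2 = (q - 1) * ((q + 1) / 2) := by
      subst hk
      have : (2 * k + 1) ^ 2 = 4 * k ^ 2 + 4 * k + 1 := by ring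
      rw [this]
      have : (2 * k + 1 + 1) / 2 = k + 1 := by omega
      rw [this]
      have : 2 * k + 1 - 1 = 2 * k := by omega
      rw [this]
      cases k <;> ring_nf <;> omega
    rw [hqq, pow_mul, hn3q1, one_pow]
  obtain ⟨c, hc⟩ := hsq
  have hc2 : c ^ 2 = -3 := by rw [sq]; exact hc.symm
  have hcne0 : c ≠ 0 := by
    intro h0; apply hn3; rw [← hc2, h0]; ring
  -- c^q = -c
  have hcq : c ^ q = -c := by
    have hsqeq : (c ^ q) ^ 2 = c ^ 2 := by
      rw [← pow_mul, mul_comm, pow_mul, hc2, hn3q]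
    have : (c ^ q - c) * (c ^ q + c) = 0 := by linear_combination hsqeq
    rcases mul_eq_zero.mp this with h1 | h1
    · exfalso
      apply hns
      exact ⟨c, by linear_combination h1, hc2⟩
    · linear_combination h1
  refine ⟨c * b, ?_, mul_ne_zero hcne0 hbne, ?_⟩
  · rw [hmul, hcq, hbq]; ring
  · linear_combination -(b ^ 2) * hc2
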